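/- For a 2-(v,k,λ) design with replication number r and block count b, one has r(k−1)=λ(v−1), vr=bk, and r>λ; moreover b≥v and k≤r, with strict inequalities b>v and k<r when the design is non-symmetric (b≠v). -/

import Mathlib

open Finset Matrix

lemma aux_inv {ι : Type} [Fintype ι] [DecidableEq ι] (a c : ℚ) (ha : a ≠ 0)
    (hac : a + (Fintype.card ι : ℚ) * c ≠ 0) :
    IsUnit (a • (1 : Matrix ι ι ℚ) + c • (Matrix.of fun _ _ => (1 : ℚ))) := by
  set n : ℚ := (Fintype.card ι : ℚ) with hn
  set J : Matrix ι ι ℚ := Matrix.of (fun _ _ => (1 : ℚ)) with hJ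
  have hJJ : J * J = n • J := by
    ext i j
    simp [hJ, Matrix.mul_apply, n]
  set d : ℚ := -c / (a * (a + n * c)) with hd
  clear_value d
  clear_value n J
  have hmul : (a • (1 : Matrix ι ι ℚ) + c • J) * ((1/a) • (1 : Matrix ι ι ℚ) + d • J) = 1 := by
    have expand : (a • (1 : Matrix ι ι ℚ) + c • J) * ((1/a) • (1 : Matrix ι ι ℚ) + d • J)
        = (a * (1/a)) • (1 : Matrix ι ι ℚ) + (a * d + c * (1/a) + c * d * n) • J := by
      simp only [add_mul, mul_add, smul_mul_assoc, Matrix.mul_smul, one_mul, mul_one, hJJ]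
      module
    rw [expand]
    have h1 : a * (1/a) = 1 := by field_simp
    have h2 : a * d + c * (1/a) + c * d * n = 0 := by
      have hX : c * n + a ≠ 0 := by rwa [add_comm, mul_comm] at hac
      rw [hd]; field_simp
      have hX' : a + c * n ≠ 0 := by rwa [add_comm] at hX
      have e : a / (a + c * n) + c * n / (a + c * n) = 1 := by rw [← add_div, div_self hX']
      linear_combination (-c) * e
    rw [h1, h2, one_smul, zero_smul, add_zero]
  have : Invertible (a • (1 : Matrix ι ι ℚ) + c • J) := invertibleOfRightInverse _ _ hmul
  exact isUnit_of_invertible _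

/-- Basic counting identities for a non-trivial 2-(v,k,λ) design:
r(k−1)=λ(v−1), vr=bk, r>λ, b≥v, k≤r, with strict inequalities when b≠v. -/
theorem stmt0 {P : Type} [Fintype P] [DecidableEq P]
    (Bs : Finset (Finset P)) (v b r k lam : ℕ)
    (hlampos : 0 < lam)
    (hnt : 2 < k ∧ k < v - 1)
    (hv : Fintype.card P = v)
    (hk : ∀ bl ∈ Bs, bl.card = k)
    (hlam : ∀ p q : P, p ≠ q →
      (Bs.filter (fun bl => p ∈ bl ∧ q ∈ bl)).card = lam)
    (hr : ∀ p : P, (Bs.filter (fun bl => p ∈ bl)).card = r)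
    (hb : Bs.card = b) :
    r * (k - 1) = lam * (v - 1) ∧ v * r = b * k ∧ lam < r ∧
      v ≤ b ∧ k ≤ r ∧ (b ≠ v → v < b ∧ k < r) := by
  obtain ⟨hk2, hkv⟩ := hnt
  have hv5 : 5 ≤ v := by omega
  have hPpos : 0 < Fintype.card P := by omega
  have ⟨p⟩ : Nonempty P := Fintype.card_pos_iff.mp hPpos
  -- First identity
  have eq1 : r * (k - 1) = lam * (v - 1) := by
    have lhs : ∑ B ∈ Bs.filter (fun B => p ∈ B), (B.erase p).card = r * (k - 1) := by
      rw [Finset.sum_congr rfl (fun B hB => ?_), Finset.sum_const, smul_eq_mul, hr p]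
      rw [mem_filter] at hB
      rw [Finset.card_erase_of_mem hB.2, hk B hB.1]
    have rhs : ∑ B ∈ Bs.filter (fun B => p ∈ B), (B.erase p).card = lam * (v - 1) := by
      have step : ∀ B : Finset P, (B.erase p).card
          = ∑ q ∈ Finset.univ.erase p, if q ∈ B then 1 else 0 := by
        intro B
        have : B.erase p = (Finset.univ.erase p).filter (fun q => q ∈ B) := by
          ext q; simp [and_comm]
        rw [this, Finset.card_filter]
      calc ∑ B ∈ Bs.filter (fun B => p ∈ B), (B.erase p).card
          = ∑ B ∈ Bs.filter (fun B => p ∈ B), ∑ q ∈ Finset.univ.erase p,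
              (if q ∈ B then 1 else 0) := Finset.sum_congr rfl (fun B _ => step B)
        _ = ∑ q ∈ Finset.univ.erase p, ∑ B ∈ Bs.filter (fun B => p ∈ B),
              (if q ∈ B then 1 else 0) := Finset.sum_comm
        _ = ∑ q ∈ Finset.univ.erase p, lam := by
            refine Finset.sum_congr rfl (fun q hq => ?_)
            rw [← Finset.card_filter, Finset.filter_filter]
            rw [Finset.mem_erase] at hq
            exact hlam p q (Ne.symm hq.1)
        _ = lam * (v - 1) := by
            rw [Finset.sum_const, smul_eq_mul, Finset.card_erase_of_mem (Finset.mem_univ p),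
              Finset.card_univ, hv, mul_comm]
    omega
  -- Second identity
  have eq2 : v * r = b * k := by
    have lhs : ∑ q : P, (Bs.filter (fun bl => q ∈ bl)).card = v * r := by
      rw [Finset.sum_congr rfl (fun q _ => hr q), Finset.sum_const, smul_eq_mul,
        Finset.card_univ, hv]
    have rhs : ∑ q : P, (Bs.filter (fun bl => q ∈ bl)).card = b * k := by
      calc ∑ q : P, (Bs.filter (fun bl => q ∈ bl)).card
          = ∑ q : P, ∑ B ∈ Bs, (if q ∈ B then 1 else 0) := by
            exact Finset.sum_congr rfl fun q _ => Finset.card_filter _ _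
        _ = ∑ B ∈ Bs, ∑ q : P, (if q ∈ B then 1 else 0) := Finset.sum_comm
        _ = ∑ B ∈ Bs, B.card := by
            refine Finset.sum_congr rfl (fun B _ => ?_)
            rw [← Finset.card_filter, Finset.filter_univ_mem]
        _ = b * k := by
            rw [Finset.sum_congr rfl (fun B hB => hk B hB), Finset.sum_const, smul_eq_mul, hb]
    omega
  -- r > lam
  have hlr : lam < r := by
    by_contra h
    push_neg at h
    have h1 : lam * (v - 1) ≤ lam * (k - 1) := by
      calc lam * (v - 1) = r * (k - 1) := eq1.symm
        _ ≤ lam * (k - 1) := Nat.mul_le_mul_right _ h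
    have h2 : v - 1 ≤ k - 1 := Nat.le_of_mul_le_mul_left h1 hlampos
    omega
  -- Fisher's inequality
  have hvb : v ≤ b := by
    classical
    set ι := {x // x ∈ Bs}
    set M : Matrix P ι ℚ := Matrix.of fun (q : P) (B : ι) =>
      if q ∈ (B : Finset P) then (1 : ℚ) else 0 with hM
    have hG : M * Mᵀ = ((r : ℚ) - lam) • (1 : Matrix P P ℚ)
        + (lam : ℚ) • (Matrix.of fun _ _ => (1 : ℚ)) := by
      ext x y
      simp only [Matrix.mul_apply, Matrix.transpose_apply, hM, Matrix.of_apply,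
        Matrix.add_apply, Matrix.smul_apply, Matrix.one_apply, smul_eq_mul]
      have step : ∀ B : ι, (if x ∈ (B : Finset P) then (1:ℚ) else 0)
          * (if y ∈ (B : Finset P) then (1:ℚ) else 0)
          = (if x ∈ (B : Finset P) ∧ y ∈ (B : Finset P) then (1:ℚ) else 0) := by
        intro B; split_ifs with h1 h2 h3 <;> simp_all
      rw [Finset.sum_congr rfl (fun B _ => step B), Finset.univ_eq_attach,
        Finset.sum_attach Bs (fun B => if x ∈ B ∧ y ∈ B then (1:ℚ) else 0)]
      rw [Finset.sum_boole]
      by_cases hxy : x = y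
      · subst hxy
        have : Bs.filter (fun B => x ∈ B ∧ x ∈ B) = Bs.filter (fun B => x ∈ B) := by
          simp
        rw [this, hr x]
        simp
      · rw [hlam x y hxy]
        simp [hxy]
    have ha : ((r : ℚ) - lam) ≠ 0 := by
      have : (lam : ℚ) < r := by exact_mod_cast hlr
      linarith
    have hac : ((r : ℚ) - lam) + (Fintype.card P : ℚ) * lam ≠ 0 := by
      have h1 : (lam : ℚ) < r := by exact_mod_cast hlr
      have h2 : (0 : ℚ) ≤ (Fintype.card P : ℚ) * lam := by positivity
      linarith
    have hunit : IsUnit (M * Mᵀ) := hG ▸ aux_inv _ _ ha hac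
    have h1 : (M * Mᵀ).rank = Fintype.card P := Matrix.rank_of_isUnit _ hunit
    have h2 : (M * Mᵀ).rank ≤ M.rank := Matrix.rank_mul_le_left M Mᵀ
    have h3 : M.rank ≤ Fintype.card ι := M.rank_le_card_width
    have h4 : Fintype.card ι = b := by rw [Fintype.card_coe, hb]
    omega
  -- k ≤ r
  have hkr : k ≤ r := by
    have h1 : v * k ≤ v * r := by
      calc v * k ≤ b * k := Nat.mul_le_mul_right _ hvb
        _ = v * r := eq2.symm
    exact Nat.le_of_mul_le_mul_left h1 (by omega)
  refine ⟨eq1, eq2, hlr, hvb, hkr, fun hne => ?_⟩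
  have hvb' : v < b := lt_of_le_of_ne hvb (Ne.symm hne)
  refine ⟨hvb', ?_⟩
  have h1 : v * k < v * r := by
    calc v * k < b * k := by
          exact Nat.mul_lt_mul_of_lt_of_le hvb' le_rfl (by omega)
      _ = v * r := eq2.symm
  exact Nat.lt_of_mul_lt_mul_left h1
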